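/- Fix 1 ≤ x₁ < … < xₙ ≤ N and set x₀ = xₙ − N. For any σ ∈ S_n and any p₁,…,pₙ ∈ D_Δ that are distinct and all nonzero, R_σ = Σ_{w∈𝒲} r_σ(w) Z_σ(w), where 𝒲 = {L,M}^n is the set of words of length n, and R_σ, r_σ(w), Z_σ(w) are defined in the context. (The Bethe equations are not assumed.) -/

import Mathlib

open scoped BigOperators
open Complex

noncomputable section

/-- `S(x,y) = e^{-ix} + e^{iy} - 2*Delta`. -/
def Sfun (Δ x y : ℝ) : ℂ :=
  Complex.exp (-(Complex.I * (x : ℂ))) + Complex.exp (Complex.I * (y : ℂ)) - 2 * (Δ : ℂ)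

/-- `μ`, the unique solution of `cos μ = -Δ` in `[0, π)` when `Δ ∈ [-1, 1)`, and `0` when `Δ < -1`. -/
def muD (Δ : ℝ) : ℝ := if -1 ≤ Δ then Real.arccos (-Δ) else 0

/-- `D_Δ = (-π + μ, π - μ)`. -/
def Ddom (Δ : ℝ) : Set ℝ := Set.Ioo (-Real.pi + muD Δ) (Real.pi - muD Δ)

/-- `L(z) = 1 + c²z/(1-z)`. -/
def Lfun (c : ℝ) (z : ℂ) : ℂ := 1 + (c : ℂ) ^ 2 * z / (1 - z)

/-- `M(z) = 1 - c²/(1-z)`. -/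
def Mfun (c : ℝ) (z : ℂ) : ℂ := 1 - (c : ℂ) ^ 2 / (1 - z)

/-- `z_j = e^{i p_j}`. -/
def zOf {n : ℕ} (p : Fin n → ℝ) : Fin n → ℂ := fun j => Complex.exp (Complex.I * (p j : ℂ))

/-- The coefficient `A_σ`. -/
def Acoef {n : ℕ} (Δ : ℝ) (p : Fin n → ℝ) (σ : Equiv.Perm (Fin n)) : ℂ :=
  ((Equiv.Perm.sign σ : ℤ) : ℂ) *
    ∏ kl ∈ Finset.univ.filter (fun kl : Fin n × Fin n => kl.1 < kl.2),
      Complex.exp (Complex.I * (p (σ kl.1) : ℂ)) * Sfun Δ (p (σ kl.1)) (p (σ kl.2))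

/-- `Z_σ(w)`; the letter `L` is encoded by `true` and the letter `M` by `false`. -/
def Zword {n : ℕ} (x : ℕ → ℤ) (z : Fin n → ℂ) (σ : Equiv.Perm (Fin n))
    (w : Fin n → Bool) : ℂ :=
  ∏ k : Fin n, if w k then z (σ k) ^ (x (k : ℕ)) else z (σ k) ^ (x ((k : ℕ) + 1))

/-- `r_σ(w)`; the letter `L` is encoded by `true` and the letter `M` by `false`;
cyclic successor and predecessor of indices are given by `finRotate`. -/
def rword {n : ℕ} (c : ℝ) (z : Fin n → ℂ) (σ : Equiv.Perm (Fin n))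
    (w : Fin n → Bool) : ℂ :=
  (∏ k : Fin n, if w k = false ∧ w (finRotate n k) = true then
      Mfun c (z (σ k)) * Lfun c (z (σ (finRotate n k))) - 1 else 1) *
  (∏ k : Fin n, if w ((finRotate n).symm k) = true ∧ w k = true then
      Lfun c (z (σ k)) else 1) *
  (∏ k : Fin n, if w k = false ∧ w (finRotate n k) = false then
      Mfun c (z (σ k)) else 1)

open scoped Classical in
/-- `R_σ`: the sum of `c^{P(Ψ_x, Ψ_y)} ∏_k z_{σ(k)}^{y_k}` over integer tuples
`x₀ ≤ y₁ ≤ x₁ ≤ y₂ ≤ … ≤ x_{n-1} ≤ yₙ ≤ xₙ` with entries pairwise distinct mod `N`. -/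
def Rsum {n : ℕ} (N : ℕ) (c : ℝ) (x : ℕ → ℤ) (z : Fin n → ℂ)
    (σ : Equiv.Perm (Fin n)) : ℂ :=
  ∑ y ∈ (Fintype.piFinset fun _ : Fin n => Finset.Icc (x 0) (x n)).filter
      (fun y : Fin n → ℤ =>
        (∀ k : Fin n, x (k : ℕ) ≤ y k ∧ y k ≤ x ((k : ℕ) + 1)) ∧
        ∀ k l : Fin n, k ≠ l → ¬ ((N : ℤ) ∣ (y k - y l))),
    (∏ k : Fin n, if y k = x (k : ℕ) ∨ y k = x ((k : ℕ) + 1) then 1 else (c : ℂ) ^ 2) *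
      ∏ k : Fin n, z (σ k) ^ (y k)



/-! ### Auxiliary lemmas -/

lemma exp_ne_one_of_small (t : ℝ) (ht : t ≠ 0) (h1 : -Real.pi < t) (h2 : t < Real.pi) :
    Complex.exp (Complex.I * (t:ℂ)) ≠ 1 := by
  intro h
  rw [Complex.exp_eq_one_iff] at h
  obtain ⟨m, hm⟩ := h
  have hC : (t:ℂ) = ((2 * Real.pi * m : ℝ) : ℂ) := by
    push_cast
    refine mul_left_cancel₀ Complex.I_ne_zero ?_
    rw [hm]; ring
  have hR : t = 2 * Real.pi * m := Complex.ofReal_injective hC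
  have hπ : 0 < Real.pi := Real.pi_pos
  rcases lt_trichotomy m 0 with hm0 | hm0 | hm0
  · have h' : m ≤ -1 := by omega
    have : (m:ℝ) ≤ -1 := by exact_mod_cast h'
    nlinarith
  · apply ht; rw [hR, hm0]; simp
  · have h' : 1 ≤ m := by omega
    have : (1:ℝ) ≤ (m:ℝ) := by exact_mod_cast h'
    nlinarith

lemma geom_Icc (z : ℂ) (hz0 : z ≠ 0) (a : ℤ) : ∀ b : ℤ, a ≤ b →
    (∑ t ∈ Finset.Icc a b, z ^ t) * (1 - z) = z ^ a - z ^ (b+1) := by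
  refine Int.le_induction ?_ ?_
  · rw [Finset.Icc_self, Finset.sum_singleton, zpow_add_one₀ hz0]
    ring
  · intro b hb ih
    have hins : Finset.Icc a (b+1) = insert (b+1) (Finset.Icc a b) := by
      ext t; simp only [Finset.mem_Icc, Finset.mem_insert]; omega
    have hnm : (b+1) ∉ Finset.Icc a b := by simp
    rw [hins, Finset.sum_insert hnm, add_mul, ih, zpow_add_one₀ hz0 (b+1)]
    ring

lemma interval_sum (c : ℝ) (z : ℂ) (hz1 : z ≠ 1) (hz0 : z ≠ 0) (a b : ℤ) (hab : a < b) :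
    ∑ t ∈ Finset.Icc a b, (if t = a ∨ t = b then (1:ℂ) else (c:ℂ)^2) * z^t
      = Lfun c z * z ^ a + Mfun c z * z ^ b := by
  have hne : a ≠ b := hab.ne
  calc ∑ t ∈ Finset.Icc a b, (if t = a ∨ t = b then (1:ℂ) else (c:ℂ)^2) * z^t
      = ∑ t ∈ Finset.Icc a b, ((c:ℂ)^2 * z^t
          + ((if t = a then ((1:ℂ) - (c:ℂ)^2) * z^t else 0) + (if t = b then ((1:ℂ)-(c:ℂ)^2) * z^t else 0))) := by
        refine Finset.sum_congr rfl fun t _ => ?_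
        by_cases ha : t = a
        · subst ha; simp [hne]; ring
        · by_cases hbb : t = b
          · subst hbb; simp [Ne.symm hne, ha]; ring
          · simp [ha, hbb]
    _ = (c:ℂ)^2 * (∑ t ∈ Finset.Icc a b, z ^ t)
          + (((1:ℂ)-(c:ℂ)^2) * z^a + ((1:ℂ)-(c:ℂ)^2) * z^b) := by
        rw [Finset.sum_add_distrib, Finset.sum_add_distrib, ← Finset.mul_sum]
        rw [Finset.sum_ite_eq' (Finset.Icc a b) a, Finset.sum_ite_eq' (Finset.Icc a b) b]
        simp [Finset.mem_Icc, le_of_lt hab]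
    _ = Lfun c z * z ^ a + Mfun c z * z ^ b := by
        have h1z : (1:ℂ) - z ≠ 0 := sub_ne_zero.mpr (Ne.symm hz1)
        have hg : (∑ t ∈ Finset.Icc a b, z ^ t) = (z ^ a - z ^ b * z) / (1 - z) := by
          rw [eq_div_iff h1z, geom_Icc z hz0 a b (le_of_lt hab), zpow_add_one₀ hz0]
        rw [hg, Lfun, Mfun]
        field_simp
        ring

lemma delta_sum (f : ℤ → ℂ) (s : Finset ℤ) (b : ℤ) (hb : b ∈ s) :
    ∑ t ∈ s, f t * (if t = b then 1 else 0) = f b := by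
  rw [Finset.sum_congr rfl (fun t _ => by rw [mul_ite, mul_one, mul_zero]),
    Finset.sum_ite_eq' s b f, if_pos hb]

lemma finRotate_val {n : ℕ} (k : Fin n) : ((finRotate n k : ℕ)) = ((k : ℕ) + 1) % n := by
  cases n with
  | zero => exact k.elim0
  | succ m =>
      rw [finRotate_succ_apply]
      simp [Fin.val_add, Nat.add_mod]

lemma distinct_iff {n : ℕ} (N : ℕ) (hN : 0 < N) (x : ℕ → ℤ)
    (hx0 : x 0 = x n - N)
    (hxmono : ∀ i j, i < j → j ≤ n → x i < x j)
    (y : Fin n → ℤ)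
    (hy : ∀ k : Fin n, x (k:ℕ) ≤ y k ∧ y k ≤ x ((k:ℕ)+1)) :
    (∀ k l : Fin n, k ≠ l → ¬ ((N:ℤ) ∣ (y k - y l))) ↔
      ∀ k : Fin n, ¬ (y k = x ((k:ℕ)+1) ∧ y (finRotate n k) = x ((finRotate n k : ℕ))) := by
  have hmono' : ∀ i j, i ≤ j → j ≤ n → x i ≤ x j := by
    intro i j hij hj
    rcases eq_or_lt_of_le hij with rfl | h
    · exact le_rfl
    · exact (hxmono i j h hj).le
  constructor
  · rintro hd k ⟨h1, h2⟩
    by_cases hkr : k = finRotate n k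
    · rw [← hkr] at h2
      have := hxmono (k:ℕ) ((k:ℕ)+1) (lt_add_one _) k.isLt
      omega
    · refine hd k (finRotate n k) hkr ?_
      rw [h1, h2]
      by_cases heq : (k:ℕ)+1 = n
      · have hv : ((finRotate n k : ℕ)) = 0 := by
          rw [finRotate_val, heq, Nat.mod_self]
        rw [hv, heq, hx0]
        simp
      · have hlt : (k:ℕ)+1 < n := lt_of_le_of_ne k.isLt heq
        have hv : ((finRotate n k : ℕ)) = (k:ℕ)+1 := by
          rw [finRotate_val, Nat.mod_eq_of_lt hlt]
        rw [hv]
        simp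
  · intro hnE k l hkl hdvd
    have main : ∀ k l : Fin n, (k:ℕ) < (l:ℕ) → ¬ ((N:ℤ) ∣ (y l - y k)) := by
      intro k l hkl hdvd
      have h1 : y k ≤ x ((k:ℕ)+1) := (hy k).2
      have h2 : x ((k:ℕ)+1) ≤ x (l:ℕ) := hmono' _ _ hkl (le_of_lt l.isLt)
      have h3 : x (l:ℕ) ≤ y l := (hy l).1
      have h4 : y l ≤ x ((l:ℕ)+1) := (hy l).2
      have h5 : x ((l:ℕ)+1) ≤ x n := hmono' _ _ l.isLt le_rfl
      have h6 : x 0 ≤ x (k:ℕ) := hmono' 0 _ (Nat.zero_le _) (le_of_lt (Nat.lt_of_lt_of_le k.isLt le_rfl))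
      have h7 : x (k:ℕ) ≤ y k := (hy k).1
      have hNpos : (0:ℤ) < (N:ℤ) := by exact_mod_cast hN
      obtain ⟨m, hm⟩ := hdvd
      have hm0 : 0 ≤ m := by
        by_contra h
        push_neg at h
        have hm1 : m ≤ -1 := by omega
        nlinarith
      have hm1 : m ≤ 1 := by
        by_contra h
        push_neg at h
        have hm2 : 2 ≤ m := by omega
        nlinarith
      rcases (by omega : m = 0 ∨ m = 1) with rfl | rfl
      · have hyy : y k = y l := by omega
        have hll : (k:ℕ)+1 = (l:ℕ) := by
          by_contra h
          have hlt : (k:ℕ)+1 < (l:ℕ) := by omega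
          have := hxmono _ _ hlt (le_of_lt l.isLt)
          omega
        rw [hll] at h1
        have e1 : y k = x (l:ℕ) := by omega
        have e2 : y l = x (l:ℕ) := by omega
        refine hnE k ⟨by rw [hll]; exact e1, ?_⟩
        have hrot : finRotate n k = l := by
          apply Fin.ext
          rw [finRotate_val, hll, Nat.mod_eq_of_lt l.isLt]
        rw [hrot, e2]
      · rw [mul_one] at hm
        have hk0 : (k:ℕ) = 0 := by
          by_contra h
          have : 0 < (k:ℕ) := by omega
          have := hxmono 0 (k:ℕ) this (le_of_lt k.isLt)
          omega
        have hl1 : (l:ℕ)+1 = n := by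
          by_contra h
          have hlt : (l:ℕ)+1 < n := by omega
          have := hxmono _ _ hlt le_rfl
          omega
        rw [hk0] at h6 h7
        rw [hl1] at h4 h5
        have e1 : y l = x n := by omega
        have e2 : y k = x 0 := by omega
        refine hnE l ⟨by rw [hl1]; exact e1, ?_⟩
        have hrot : finRotate n l = k := by
          apply Fin.ext
          rw [finRotate_val, hl1, Nat.mod_self, hk0]
        rw [hrot, e2, hk0]
    rcases Nat.lt_or_ge (k:ℕ) (l:ℕ) with h | h
    · exact main k l h (by
        have heq : y l - y k = -(y k - y l) := by ring
        rw [heq]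
        exact hdvd.neg_right)
    · have hlk : (l:ℕ) < (k:ℕ) := by
        rcases Nat.lt_or_ge (l:ℕ) (k:ℕ) with h' | h'
        · exact h'
        · exact absurd (Fin.ext (le_antisymm h' h)) hkl
      exact main l k hlk hdvd

/-- The per-letter factor after expansion. -/
def gfun {n : ℕ} (c : ℝ) (x : ℕ → ℤ) (zz : Fin n → ℂ) (S : Finset (Fin n))
    (j : Fin n) (b : Bool) : ℂ :=
  (if b then zz j ^ (x (j:ℕ)) else zz j ^ (x ((j:ℕ)+1))) *
  (if j ∈ S then (if b then 0 else 1) else 1) *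
  (if j ∈ S.map (finRotate n).toEmbedding then (if b then 1 else 0) else 1) *
  (if j ∈ S ∨ j ∈ S.map (finRotate n).toEmbedding then 1
   else (if b then Lfun c (zz j) else Mfun c (zz j)))

/-- The per-coordinate summand. -/
def Hfun {n : ℕ} (c : ℝ) (x : ℕ → ℤ) (zz : Fin n → ℂ) (S : Finset (Fin n))
    (j : Fin n) (t : ℤ) : ℂ :=
  ((if t = x (j:ℕ) ∨ t = x ((j:ℕ)+1) then (1:ℂ) else (c:ℂ)^2) * zz j ^ t) *
  (if j ∈ S then (if t = x ((j:ℕ)+1) then 1 else 0) else 1) *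
  (if j ∈ S.map (finRotate n).toEmbedding then (if t = x (j:ℕ) then 1 else 0) else 1)

lemma Hsum {n : ℕ} (c : ℝ) (x : ℕ → ℤ) (zz : Fin n → ℂ)
    (hzz1 : ∀ j, zz j ≠ 1) (hzz0 : ∀ j, zz j ≠ 0)
    (hxk : ∀ k : Fin n, x (k:ℕ) < x ((k:ℕ)+1)) (S : Finset (Fin n)) (j : Fin n) :
    ∑ t ∈ Finset.Icc (x (j:ℕ)) (x ((j:ℕ)+1)), Hfun c x zz S j t
      = gfun c x zz S j false + gfun c x zz S j true := by
  have hne : x (j:ℕ) ≠ x ((j:ℕ)+1) := (hxk j).ne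
  have hMiff : j ∈ S.map (finRotate n).toEmbedding ↔ (finRotate n).symm j ∈ S :=
    Finset.mem_map_equiv
  by_cases hS : j ∈ S <;> by_cases hM : (finRotate n).symm j ∈ S
  · rw [Finset.sum_eq_zero]
    · simp [gfun, hS, hM, hMiff, -finRotate_apply, -finRotate_symm_apply]
    · intro t ht
      rw [Hfun, if_pos hS, if_pos (hMiff.mpr hM)]
      by_cases h1 : t = x ((j:ℕ)+1)
      · have h2 : ¬ t = x (j:ℕ) := by rw [h1]; exact Ne.symm hne
        simp [h2]
      · simp [h1]
  · have heq : ∀ t ∈ Finset.Icc (x (j:ℕ)) (x ((j:ℕ)+1)), Hfun c x zz S j t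
        = ((if t = x (j:ℕ) ∨ t = x ((j:ℕ)+1) then (1:ℂ) else (c:ℂ)^2) * zz j ^ t) *
          (if t = x ((j:ℕ)+1) then 1 else 0) := by
      intro t ht
      rw [Hfun, if_pos hS, if_neg (fun h => hM (hMiff.mp h)), mul_one]
    rw [Finset.sum_congr rfl heq,
      delta_sum _ _ _ (by simp [Finset.mem_Icc, (hxk j).le]),
      if_pos (Or.inr rfl), one_mul]
    simp [gfun, hS, hM, hMiff, -finRotate_apply, -finRotate_symm_apply]
  · have heq : ∀ t ∈ Finset.Icc (x (j:ℕ)) (x ((j:ℕ)+1)), Hfun c x zz S j t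
        = ((if t = x (j:ℕ) ∨ t = x ((j:ℕ)+1) then (1:ℂ) else (c:ℂ)^2) * zz j ^ t) *
          (if t = x (j:ℕ) then 1 else 0) := by
      intro t ht
      rw [Hfun, if_neg hS, if_pos (hMiff.mpr hM), mul_one]
    rw [Finset.sum_congr rfl heq,
      delta_sum _ _ _ (by simp [Finset.mem_Icc, (hxk j).le]),
      if_pos (Or.inl rfl), one_mul]
    simp [gfun, hS, hM, hMiff, -finRotate_apply, -finRotate_symm_apply]
  · have heq : ∀ t ∈ Finset.Icc (x (j:ℕ)) (x ((j:ℕ)+1)), Hfun c x zz S j t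
        = (if t = x (j:ℕ) ∨ t = x ((j:ℕ)+1) then (1:ℂ) else (c:ℂ)^2) * zz j ^ t := by
      intro t ht
      rw [Hfun, if_neg hS, if_neg (fun h => hM (hMiff.mp h)), mul_one, mul_one]
    rw [Finset.sum_congr rfl heq, interval_sum c (zz j) (hzz1 j) (hzz0 j) _ _ (hxk j)]
    simp only [gfun, hS, hM, hMiff, if_false, if_true, iff_false, Bool.false_eq_true,
      Bool.true_eq_false]
    simp [hS, hM]
    ring

lemma sum_box {n : ℕ} (c : ℝ) (x : ℕ → ℤ) (zz : Fin n → ℂ)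
    (hzz1 : ∀ j, zz j ≠ 1) (hzz0 : ∀ j, zz j ≠ 0)
    (hxk : ∀ k : Fin n, x (k:ℕ) < x ((k:ℕ)+1)) (S : Finset (Fin n)) :
    ∑ y ∈ Fintype.piFinset (fun k : Fin n => Finset.Icc (x (k:ℕ)) (x ((k:ℕ)+1))),
      ((∏ k, if y k = x (k:ℕ) ∨ y k = x ((k:ℕ)+1) then (1:ℂ) else (c:ℂ)^2) * ∏ k, zz k ^ (y k)) *
      (∏ k ∈ S, ((if y k = x ((k:ℕ)+1) then (1:ℂ) else 0) *
        (if y (finRotate n k) = x ((finRotate n k : ℕ)) then 1 else 0)))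
    = ∏ j, (gfun c x zz S j false + gfun c x zz S j true) := by
  have hfact : ∀ y : Fin n → ℤ,
      ((∏ k, if y k = x (k:ℕ) ∨ y k = x ((k:ℕ)+1) then (1:ℂ) else (c:ℂ)^2) * ∏ k, zz k ^ (y k)) *
      (∏ k ∈ S, ((if y k = x ((k:ℕ)+1) then (1:ℂ) else 0) *
        (if y (finRotate n k) = x ((finRotate n k : ℕ)) then 1 else 0)))
      = ∏ j, Hfun c x zz S j (y j) := by
    intro y
    have h1 : (∏ k ∈ S, ((if y k = x ((k:ℕ)+1) then (1:ℂ) else 0) *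
        (if y (finRotate n k) = x ((finRotate n k : ℕ)) then 1 else 0)))
        = (∏ k ∈ S, (if y k = x ((k:ℕ)+1) then (1:ℂ) else 0)) *
          (∏ j ∈ S.map (finRotate n).toEmbedding, (if y j = x ((j:ℕ)) then (1:ℂ) else 0)) := by
      rw [Finset.prod_mul_distrib, Finset.prod_map S (finRotate n).toEmbedding
        (fun j => (if y j = x ((j:ℕ)) then (1:ℂ) else 0))]
      rfl
    have h2 : (∏ k ∈ S, (if y k = x ((k:ℕ)+1) then (1:ℂ) else 0))
        = ∏ k, (if k ∈ S then (if y k = x ((k:ℕ)+1) then (1:ℂ) else 0) else 1) := by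
      rw [Finset.prod_ite_mem Finset.univ S, Finset.univ_inter]
    have h3 : (∏ j ∈ S.map (finRotate n).toEmbedding, (if y j = x ((j:ℕ)) then (1:ℂ) else 0))
        = ∏ j, (if j ∈ S.map (finRotate n).toEmbedding
            then (if y j = x ((j:ℕ)) then (1:ℂ) else 0) else 1) := by
      rw [Finset.prod_ite_mem Finset.univ _, Finset.univ_inter]
    rw [h1, h2, h3, ← Finset.prod_mul_distrib, ← Finset.prod_mul_distrib,
      ← Finset.prod_mul_distrib]
    exact Finset.prod_congr rfl fun j _ => by simp only [Hfun]; ring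
  rw [Finset.sum_congr rfl (fun y _ => hfact y), ← Finset.prod_univ_sum]
  exact Finset.prod_congr rfl fun j _ => Hsum c x zz hzz1 hzz0 hxk S j

lemma cf_eq {n : ℕ} (c : ℝ) (zz : Fin n → ℂ) (w : Fin n → Bool) (S : Finset (Fin n))
    (hS : S ⊆ Finset.univ.filter (fun k => w k = false ∧ w (finRotate n k) = true)) :
    ∏ j, (if j ∈ S ∨ j ∈ S.map (finRotate n).toEmbedding then (1:ℂ)
          else (if w j then Lfun c (zz j) else Mfun c (zz j)))
    = (∏ k ∈ (Finset.univ.filter (fun k => w k = false ∧ w (finRotate n k) = true)) \ S,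
         Mfun c (zz k) * Lfun c (zz (finRotate n k))) *
      (∏ k, if w ((finRotate n).symm k) = true ∧ w k = true then Lfun c (zz k) else 1) *
      (∏ k, if w k = false ∧ w (finRotate n k) = false then Mfun c (zz k) else 1) := by
  classical
  have hj1 : ∀ j, j ∈ S → w j = false ∧ w (finRotate n j) = true := by
    intro j hj
    simpa using hS hj
  have hsplit : (∏ k ∈ (Finset.univ.filter
        (fun k => w k = false ∧ w (finRotate n k) = true)) \ S,
        Mfun c (zz k) * Lfun c (zz (finRotate n k)))
      = (∏ k, if k ∈ (Finset.univ.filter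
            (fun k => w k = false ∧ w (finRotate n k) = true)) \ S then Mfun c (zz k) else 1) *
        (∏ j, if j ∈ ((Finset.univ.filter
            (fun k => w k = false ∧ w (finRotate n k) = true)) \ S).map (finRotate n).toEmbedding
            then Lfun c (zz j) else 1) := by
    rw [Finset.prod_mul_distrib]
    congr 1
    · rw [Finset.prod_ite_mem Finset.univ _, Finset.univ_inter]
    · rw [Finset.prod_ite_mem Finset.univ _, Finset.univ_inter,
        Finset.prod_map _ (finRotate n).toEmbedding (fun j => Lfun c (zz j))]
      rfl
  rw [hsplit, mul_assoc, mul_assoc, ← Finset.prod_mul_distrib, ← Finset.prod_mul_distrib,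
    ← Finset.prod_mul_distrib]
  refine Finset.prod_congr rfl fun j _ => ?_
  have hrr : finRotate n ((finRotate n).symm j) = j := Equiv.apply_symm_apply _ j
  by_cases hwj : w j <;> by_cases hwp : w ((finRotate n).symm j) <;>
    by_cases hwn : w (finRotate n j) <;> by_cases hjS : j ∈ S <;>
    by_cases hpS : (finRotate n).symm j ∈ S <;>
    (try have hc := hj1 j hjS) <;>
    (try (have hc' := hj1 _ hpS; rw [hrr] at hc')) <;>
    simp_all [Finset.mem_sdiff, Finset.mem_filter, Finset.mem_map_equiv, hrr]

lemma sum_over_S {n : ℕ} (c : ℝ) (x : ℕ → ℤ) (zz : Fin n → ℂ) (w : Fin n → Bool) :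
    ∑ S ∈ (Finset.univ : Finset (Fin n)).powerset,
      (∏ _k ∈ S, (-1 : ℂ)) * ∏ j, gfun c x zz S j (w j)
    = ((∏ k, if w k = false ∧ w (finRotate n k) = true then
          Mfun c (zz k) * Lfun c (zz (finRotate n k)) - 1 else 1) *
       (∏ k, if w ((finRotate n).symm k) = true ∧ w k = true then Lfun c (zz k) else 1) *
       (∏ k, if w k = false ∧ w (finRotate n k) = false then Mfun c (zz k) else 1)) *
      ∏ k, (if w k then zz k ^ (x (k:ℕ)) else zz k ^ (x ((k:ℕ)+1))) := by
  classical
  set ML := Finset.univ.filter (fun k : Fin n => w k = false ∧ w (finRotate n k) = true)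
    with hML
  have hzero : ∀ S ∈ Finset.univ.powerset, S ∉ ML.powerset →
      (∏ _k ∈ S, (-1 : ℂ)) * ∏ j, gfun c x zz S j (w j) = 0 := by
    intro S _ hSML
    rw [Finset.mem_powerset] at hSML
    obtain ⟨k, hkS, hkML⟩ := Finset.not_subset.mp hSML
    rw [hML, Finset.mem_filter] at hkML
    push_neg at hkML
    have hkML' := hkML (Finset.mem_univ k)
    by_cases hwk : w k = false
    · have hwr : ¬ w (finRotate n k) = true := fun h => by simp [hwk, h, -finRotate_apply, -finRotate_symm_apply] at hkML'
      have hmem : finRotate n k ∈ S.map (finRotate n).toEmbedding :=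
        Finset.mem_map_equiv.mpr (by simpa [-finRotate_apply, -finRotate_symm_apply] using hkS)
      have hwrf : w (finRotate n k) = false := by
        revert hwr; cases w (finRotate n k) <;> simp
      rw [Finset.prod_eq_zero (Finset.mem_univ (finRotate n k)), mul_zero]
      rw [gfun, if_pos hmem, hwrf]
      simp
    · have hwk' : w k = true := by revert hwk; cases w k <;> simp
      rw [Finset.prod_eq_zero (Finset.mem_univ k), mul_zero]
      rw [gfun, if_pos hkS, hwk']
      simp
  rw [← Finset.sum_subset (Finset.powerset_mono.mpr (Finset.subset_univ ML)) hzero]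
  have hterm : ∀ S ∈ ML.powerset,
      (∏ _k ∈ S, (-1 : ℂ)) * ∏ j, gfun c x zz S j (w j)
      = ((∏ _k ∈ S, (-1 : ℂ)) * ∏ k ∈ ML \ S, Mfun c (zz k) * Lfun c (zz (finRotate n k))) *
        ((∏ k, if w ((finRotate n).symm k) = true ∧ w k = true then Lfun c (zz k) else 1) *
         (∏ k, if w k = false ∧ w (finRotate n k) = false then Mfun c (zz k) else 1) *
         ∏ k, (if w k then zz k ^ (x (k:ℕ)) else zz k ^ (x ((k:ℕ)+1)))) := by
    intro S hS
    rw [Finset.mem_powerset] at hS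
    have hg : ∀ j, gfun c x zz S j (w j)
        = (if w j then zz j ^ (x (j:ℕ)) else zz j ^ (x ((j:ℕ)+1))) *
          (if j ∈ S ∨ j ∈ S.map (finRotate n).toEmbedding then (1:ℂ)
           else (if w j then Lfun c (zz j) else Mfun c (zz j))) := by
      intro j
      have h2 : (if j ∈ S then (if w j then (0:ℂ) else 1) else 1) = 1 := by
        by_cases hjS : j ∈ S
        · have : w j = false := by
            have h := hS hjS
            rw [hML, Finset.mem_filter] at h
            exact h.2.1
          simp [hjS, this]
        · simp [hjS]
      have h3 : (if j ∈ S.map (finRotate n).toEmbedding then (if w j then (1:ℂ) else 0) else 1)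
          = 1 := by
        by_cases hjm : j ∈ S.map (finRotate n).toEmbedding
        · have hsm : (finRotate n).symm j ∈ S := Finset.mem_map_equiv.mp hjm
          have h := hS hsm
          rw [hML, Finset.mem_filter] at h
          have h' := h.2.2
          rw [Equiv.apply_symm_apply] at h'
          simp [hjm, h']
        · rw [if_neg hjm]
      rw [gfun, h2, h3, mul_one, mul_one]
    calc (∏ _k ∈ S, (-1 : ℂ)) * ∏ j, gfun c x zz S j (w j)
        = (∏ _k ∈ S, (-1 : ℂ)) *
          ((∏ j, (if w j then zz j ^ (x (j:ℕ)) else zz j ^ (x ((j:ℕ)+1)))) *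
           (∏ j, (if j ∈ S ∨ j ∈ S.map (finRotate n).toEmbedding then (1:ℂ)
               else (if w j then Lfun c (zz j) else Mfun c (zz j))))) := by
          rw [← Finset.prod_mul_distrib]
          congr 1
          exact Finset.prod_congr rfl fun j _ => hg j
      _ = _ := by
          rw [cf_eq c zz w S (hML ▸ hS)]
          try rw [← hML]
          try ring
  rw [Finset.sum_congr rfl hterm, ← Finset.sum_mul]
  have hprodadd : ∏ k ∈ ML, ((-1:ℂ) + Mfun c (zz k) * Lfun c (zz (finRotate n k)))
      = ∑ S ∈ ML.powerset, (∏ _k ∈ S, (-1 : ℂ)) *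
          ∏ k ∈ ML \ S, Mfun c (zz k) * Lfun c (zz (finRotate n k)) :=
    Finset.prod_add _ _ _
  rw [← hprodadd]
  have hfirst : (∏ k, if w k = false ∧ w (finRotate n k) = true then
        Mfun c (zz k) * Lfun c (zz (finRotate n k)) - 1 else 1)
      = ∏ k ∈ ML, ((-1:ℂ) + Mfun c (zz k) * Lfun c (zz (finRotate n k))) := by
    rw [Finset.prod_filter]
    exact Finset.prod_congr rfl fun k _ => by rw [neg_add_eq_sub]
  rw [hfirst]
  ring


/-- **Lemma 3.5: encoding of `R_σ` with words.** -/
theorem Rsum_eq_sum_words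
    (N n : ℕ) (hN : 0 < N)
    (c : ℝ) (hc : 0 < c) (Δ : ℝ) (hΔ : Δ = (2 - c ^ 2) / 2)
    (p : Fin n → ℝ) (hpD : ∀ j, p j ∈ Ddom Δ)
    (hdistinct : Function.Injective p)
    (hnonzero : ∀ j, p j ≠ 0)
    (x : ℕ → ℤ) (hx0 : x 0 = x n - N)
    (hxmono : ∀ i j, i < j → j ≤ n → x i < x j)
    (hx1 : 1 ≤ x 1) (hxN : x n ≤ (N : ℤ))
    (σ : Equiv.Perm (Fin n)) :
    Rsum N c x (zOf p) σ = ∑ w : Fin n → Bool, rword c (zOf p) σ w * Zword x (zOf p) σ w := by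
  classical
  have hzz0 : ∀ j : Fin n, zOf p (σ j) ≠ 0 := fun j => Complex.exp_ne_zero _
  have hmu : 0 ≤ muD Δ := by
    unfold muD; split
    · exact Real.arccos_nonneg _
    · exact le_rfl
  have hzz1 : ∀ j : Fin n, zOf p (σ j) ≠ 1 := by
    intro j
    have h := hpD (σ j)
    rw [Ddom, Set.mem_Ioo] at h
    exact exp_ne_one_of_small _ (hnonzero (σ j)) (by linarith [h.1]) (by linarith [h.2])
  have hxk : ∀ k : Fin n, x (k:ℕ) < x ((k:ℕ)+1) :=
    fun k => hxmono _ _ (lt_add_one _) k.isLt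
  have hmono' : ∀ i j : ℕ, i ≤ j → j ≤ n → x i ≤ x j := by
    intro i j hij hj
    rcases eq_or_lt_of_le hij with rfl | h
    · exact le_rfl
    · exact (hxmono i j h hj).le
  calc Rsum N c x (zOf p) σ
      = ∑ y ∈ Fintype.piFinset (fun k : Fin n => Finset.Icc (x (k:ℕ)) (x ((k:ℕ)+1))),
          (if (∀ k : Fin n, ¬ (y k = x ((k:ℕ)+1) ∧
              y (finRotate n k) = x ((finRotate n k : ℕ)))) then
            ((∏ k : Fin n, if y k = x (k:ℕ) ∨ y k = x ((k:ℕ)+1) then (1:ℂ) else (c:ℂ)^2) *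
              ∏ k : Fin n, zOf p (σ k) ^ (y k)) else 0) := by
        rw [Rsum, ← Finset.sum_filter]
        apply Finset.sum_congr
        · ext y
          simp only [Finset.mem_filter, Fintype.mem_piFinset, Finset.mem_Icc]
          constructor
          · rintro ⟨-, hbox, hdist⟩
            exact ⟨fun k => hbox k, (distinct_iff N hN x hx0 hxmono y hbox).mp hdist⟩
          · rintro ⟨hbox, hnE⟩
            have hbox' : ∀ k : Fin n, x (k:ℕ) ≤ y k ∧ y k ≤ x ((k:ℕ)+1) := fun k => hbox k
            exact ⟨fun k => ⟨le_trans (hmono' 0 (k:ℕ) (Nat.zero_le _) (le_of_lt k.isLt))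
                (hbox' k).1,
              le_trans (hbox' k).2 (hmono' ((k:ℕ)+1) n k.isLt le_rfl)⟩, hbox',
              (distinct_iff N hN x hx0 hxmono y hbox').mpr hnE⟩
        · intro y _
          rfl
    _ = ∑ y ∈ Fintype.piFinset (fun k : Fin n => Finset.Icc (x (k:ℕ)) (x ((k:ℕ)+1))),
          ∑ S ∈ (Finset.univ : Finset (Fin n)).powerset,
            (∏ _k ∈ S, (-1:ℂ)) *
            (((∏ k : Fin n, if y k = x (k:ℕ) ∨ y k = x ((k:ℕ)+1) then (1:ℂ) else (c:ℂ)^2) *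
              ∏ k : Fin n, zOf p (σ k) ^ (y k)) *
             (∏ k ∈ S, ((if y k = x ((k:ℕ)+1) then (1:ℂ) else 0) *
                (if y (finRotate n k) = x ((finRotate n k : ℕ)) then 1 else 0)))) := by
        refine Finset.sum_congr rfl fun y _ => ?_
        have hind : (if (∀ k : Fin n, ¬ (y k = x ((k:ℕ)+1) ∧
              y (finRotate n k) = x ((finRotate n k : ℕ)))) then (1:ℂ) else 0)
            = ∏ k : Fin n, ((-(((if y k = x ((k:ℕ)+1) then (1:ℂ) else 0) *
                (if y (finRotate n k) = x ((finRotate n k : ℕ)) then 1 else 0)))) + 1) := by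
          by_cases hc : ∀ k : Fin n, ¬ (y k = x ((k:ℕ)+1) ∧
              y (finRotate n k) = x ((finRotate n k : ℕ)))
          · rw [if_pos hc, Finset.prod_eq_one]
            intro k _
            by_cases h1 : y k = x ((k:ℕ)+1)
            · have h2 : ¬ y (finRotate n k) = x ((finRotate n k : ℕ)) :=
                fun h2 => (hc k) ⟨h1, h2⟩
              simp [h2, -finRotate_apply, -finRotate_symm_apply]
            · simp [h1]
          · rw [if_neg hc]
            push_neg at hc
            obtain ⟨k, hk1, hk2⟩ := hc
            rw [Finset.prod_eq_zero (Finset.mem_univ k)]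
            simp [hk1, hk2, -finRotate_apply, -finRotate_symm_apply]
        have hmain : (∀ k : Fin n, ¬ (y k = x ((k:ℕ)+1) ∧
              y (finRotate n k) = x ((finRotate n k : ℕ)))) → True := fun _ => trivial
        calc (if (∀ k : Fin n, ¬ (y k = x ((k:ℕ)+1) ∧
              y (finRotate n k) = x ((finRotate n k : ℕ)))) then
            ((∏ k : Fin n, if y k = x (k:ℕ) ∨ y k = x ((k:ℕ)+1) then (1:ℂ) else (c:ℂ)^2) *
              ∏ k : Fin n, zOf p (σ k) ^ (y k)) else 0)
            = ((∏ k : Fin n, if y k = x (k:ℕ) ∨ y k = x ((k:ℕ)+1) then (1:ℂ) else (c:ℂ)^2) *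
              ∏ k : Fin n, zOf p (σ k) ^ (y k)) *
              (if (∀ k : Fin n, ¬ (y k = x ((k:ℕ)+1) ∧
                y (finRotate n k) = x ((finRotate n k : ℕ)))) then (1:ℂ) else 0) := by
              by_cases hc : ∀ k : Fin n, ¬ (y k = x ((k:ℕ)+1) ∧
                  y (finRotate n k) = x ((finRotate n k : ℕ)))
              · rw [if_pos hc, if_pos hc, mul_one]
              · rw [if_neg hc, if_neg hc, mul_zero]
          _ = _ := by
              rw [hind, Finset.prod_add, Finset.mul_sum]
              refine Finset.sum_congr rfl fun S _ => ?_
              have hneg : (∏ k ∈ S, (-(((if y k = x ((k:ℕ)+1) then (1:ℂ) else 0) *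
                  (if y (finRotate n k) = x ((finRotate n k : ℕ)) then 1 else 0)))))
                  = (∏ _k ∈ S, (-1:ℂ)) *
                    ∏ k ∈ S, ((if y k = x ((k:ℕ)+1) then (1:ℂ) else 0) *
                      (if y (finRotate n k) = x ((finRotate n k : ℕ)) then 1 else 0)) := by
                rw [← Finset.prod_mul_distrib]
                exact Finset.prod_congr rfl fun k _ => by ring
              rw [hneg, Finset.prod_const_one, mul_one]
              ring
    _ = ∑ S ∈ (Finset.univ : Finset (Fin n)).powerset,
          ∑ y ∈ Fintype.piFinset (fun k : Fin n => Finset.Icc (x (k:ℕ)) (x ((k:ℕ)+1))),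
            (∏ _k ∈ S, (-1:ℂ)) *
            (((∏ k : Fin n, if y k = x (k:ℕ) ∨ y k = x ((k:ℕ)+1) then (1:ℂ) else (c:ℂ)^2) *
              ∏ k : Fin n, zOf p (σ k) ^ (y k)) *
             (∏ k ∈ S, ((if y k = x ((k:ℕ)+1) then (1:ℂ) else 0) *
                (if y (finRotate n k) = x ((finRotate n k : ℕ)) then 1 else 0)))) :=
        Finset.sum_comm
    _ = ∑ S ∈ (Finset.univ : Finset (Fin n)).powerset,
          (∏ _k ∈ S, (-1:ℂ)) *
            ∏ j, (gfun c x (fun k => zOf p (σ k)) S j false +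
              gfun c x (fun k => zOf p (σ k)) S j true) := by
        refine Finset.sum_congr rfl fun S _ => ?_
        rw [← Finset.mul_sum]
        congr 1
        exact sum_box c x (fun k => zOf p (σ k)) hzz1 hzz0 hxk S
    _ = ∑ S ∈ (Finset.univ : Finset (Fin n)).powerset,
          ∑ w ∈ (Finset.univ : Finset (Fin n → Bool)),
            (∏ _k ∈ S, (-1:ℂ)) * ∏ j, gfun c x (fun k => zOf p (σ k)) S j (w j) := by
        refine Finset.sum_congr rfl fun S _ => ?_
        rw [← Finset.mul_sum]
        congr 1
        have hb : ∀ j : Fin n, (gfun c x (fun k => zOf p (σ k)) S j false +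
            gfun c x (fun k => zOf p (σ k)) S j true)
            = ∑ b ∈ (Finset.univ : Finset Bool), gfun c x (fun k => zOf p (σ k)) S j b := by
          intro j
          rw [Fintype.sum_bool]
          exact add_comm _ _
        rw [Finset.prod_congr rfl fun j _ => hb j, Finset.prod_univ_sum,
          Fintype.piFinset_univ]
    _ = ∑ w ∈ (Finset.univ : Finset (Fin n → Bool)),
          ∑ S ∈ (Finset.univ : Finset (Fin n)).powerset,
            (∏ _k ∈ S, (-1:ℂ)) * ∏ j, gfun c x (fun k => zOf p (σ k)) S j (w j) :=
        Finset.sum_comm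
    _ = ∑ w : Fin n → Bool, rword c (zOf p) σ w * Zword x (zOf p) σ w := by
        refine Finset.sum_congr rfl fun w _ => ?_
        rw [sum_over_S c x (fun k => zOf p (σ k)) w]
        rfl
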